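/- (Theorem 2.1, discrete fractional Lyapunov method) Let l : ℝ → ℝ satisfy l(0) = 0, and let x : ℕ → ℝ satisfy δ_n^α x = l(x(n)) for all n ≥ 1. Suppose V, W : ℝ → ℝ satisfy V(0) = W(0) = 0 and there are class-K functions φ₁, φ₂, ψ₁, ψ₂ : [0,∞) → [0,∞) with φ₁(|y|) ≤ V(y) ≤ φ₂(|y|) and ψ₁(|y|) ≤ W(y) ≤ ψ₂(|y|) for all y ∈ ℝ, and suppose δ_n^α (V∘x) ≤ −W(x(n)) for every n ≥ 1. Then x(n) → 0 as n → ∞. -/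

import Mathlib

open Filter Finset

/-- L1-scheme coefficient `b_j^{(β)} = (j+1)^β - j^β` (real powers). -/
noncomputable def bcoef (β : ℝ) (j : ℕ) : ℝ := ((j : ℝ) + 1) ^ β - (j : ℝ) ^ β

/-- L1 discretization of the Caputo derivative of order `α` with time step `Δt`,
evaluated at time level `n ≥ 1`:
`δ_n^α f = ((Δt)^{-α}/Γ(2-α)) (f n - b_{n-1} f 0 - Σ_{j=1}^{n-1} (b_{j-1}-b_j) f (n-j))`. -/
noncomputable def L1 (α Δt : ℝ) (f : ℕ → ℝ) (n : ℕ) : ℝ :=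
  Δt ^ (-α) / Real.Gamma (2 - α) *
    (f n - bcoef (1 - α) (n - 1) * f 0 -
      ∑ j ∈ Finset.Icc 1 (n - 1), (bcoef (1 - α) (j - 1) - bcoef (1 - α) j) * f (n - j))

lemma bcoef_pos' {β : ℝ} (hβ : 0 < β) (j : ℕ) : 0 < bcoef β j := by
  have : (j : ℝ) ^ β < ((j : ℝ) + 1) ^ β :=
    Real.rpow_lt_rpow (Nat.cast_nonneg j) (by linarith) hβ
  simpa [bcoef] using sub_pos.2 this

lemma bcoef_nonneg {β : ℝ} (hβ : 0 < β) (j : ℕ) : 0 ≤ bcoef β j := (bcoef_pos' hβ j).le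

lemma bcoef_zero' {β : ℝ} (hβ : 0 < β) : bcoef β 0 = 1 := by
  simp [bcoef, Real.zero_rpow hβ.ne']

lemma bcoef_anti {β : ℝ} (hβ0 : 0 < β) (hβ1 : β < 1) : Antitone (bcoef β) := by
  apply antitone_nat_of_succ_le
  intro j
  have hc := (Real.strictConcaveOn_rpow hβ0 hβ1).concaveOn
  have h := hc.2 (x := (j : ℝ)) (y := (j : ℝ) + 2)
    (Set.mem_Ici.2 (Nat.cast_nonneg j))
    (Set.mem_Ici.2 (by positivity : (0:ℝ) ≤ (j:ℝ) + 2))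
    (by norm_num : (0:ℝ) ≤ 1/2) (by norm_num : (0:ℝ) ≤ 1/2)
    (by norm_num : (1:ℝ)/2 + 1/2 = 1)
  simp only [smul_eq_mul] at h
  have hmid : (1/2 : ℝ) * (j : ℝ) + (1/2 : ℝ) * ((j : ℝ) + 2) = (j : ℝ) + 1 := by ring
  rw [hmid] at h
  simp only [bcoef]
  push_cast
  have h2 : ((j:ℝ) + 1 + 1) = (j:ℝ) + 2 := by ring
  rw [h2]
  linarith

lemma bcoef_coef_nonneg {β : ℝ} (hβ0 : 0 < β) (hβ1 : β < 1) (j : ℕ) :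
    0 ≤ bcoef β (j - 1) - bcoef β j :=
  sub_nonneg.2 (bcoef_anti hβ0 hβ1 (Nat.sub_le j 1))

lemma bcoef_tele_Ioc (β : ℝ) {a m : ℕ} (h : a ≤ m) :
    ∑ j ∈ Finset.Ioc a m, (bcoef β (j-1) - bcoef β j) = bcoef β a - bcoef β m := by
  induction m, h using Nat.le_induction with
  | base => simp
  | succ m hm ih =>
    rw [Finset.sum_Ioc_succ_top hm, ih]
    simp only [Nat.add_sub_cancel]
    ring

lemma Icc_one_eq_Ioc_zero (m : ℕ) : Finset.Icc 1 m = Finset.Ioc 0 m := by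
  ext k
  simp only [Finset.mem_Icc, Finset.mem_Ioc]
  omega

lemma bcoef_tendsto {β : ℝ} (hβ0 : 0 < β) (hβ1 : β < 1) :
    Tendsto (bcoef β) atTop (nhds 0) := by
  have hanti := bcoef_anti hβ0 hβ1
  have hbdd : BddBelow (Set.range (bcoef β)) :=
    ⟨0, by rintro y ⟨j, rfl⟩; exact bcoef_nonneg hβ0 j⟩
  have htend := tendsto_atTop_ciInf hanti hbdd
  have hm0 : (⨅ j, bcoef β j) = 0 := by
    have hmnn : 0 ≤ ⨅ j, bcoef β j := le_ciInf fun j => bcoef_nonneg hβ0 j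
    refine le_antisymm ?_ hmnn
    have hsum : ∀ n : ℕ, ∑ j ∈ Finset.range n, bcoef β j = (n : ℝ) ^ β := by
      intro n
      have h : ∀ n:ℕ, ∑ j ∈ Finset.range n, (((j:ℝ)+1)^β - (j:ℝ)^β)
          = ((n:ℝ))^β - ((0:ℕ):ℝ)^β := by
        intro n
        have := Finset.sum_range_sub (f := fun j : ℕ => ((j:ℝ))^β) n
        simpa [Nat.cast_succ] using this
      simpa [bcoef, Real.zero_rpow hβ0.ne'] using h n
    have hkey : ∀ n : ℕ, 1 ≤ n → (⨅ j, bcoef β j) ≤ (n : ℝ) ^ (β - 1) := by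
      intro n hn
      have hnpos : (0:ℝ) < n := by exact_mod_cast hn
      have h1 : (n : ℝ) * (⨅ j, bcoef β j) ≤ (n:ℝ)^β := by
        rw [← hsum n]
        calc (n : ℝ) * (⨅ j, bcoef β j) = ∑ _j ∈ Finset.range n, (⨅ j, bcoef β j) := by
              simp [mul_comm]
          _ ≤ ∑ j ∈ Finset.range n, bcoef β j :=
              Finset.sum_le_sum fun j _ => ciInf_le hbdd j
      have h2 : (⨅ j, bcoef β j) ≤ (n:ℝ)^β / n := by
        rw [le_div_iff₀ hnpos]; linarith [h1]
      calc (⨅ j, bcoef β j) ≤ (n:ℝ)^β / n := h2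
        _ = (n:ℝ)^(β-1) := by
            rw [Real.rpow_sub hnpos, Real.rpow_one]
    have hlim : Tendsto (fun n : ℕ => (n:ℝ) ^ (β-1)) atTop (nhds 0) := by
      have := (tendsto_rpow_neg_atTop (by linarith : 0 < 1 - β)).comp
        (tendsto_natCast_atTop_atTop (R := ℝ))
      simpa [Function.comp_def, neg_sub] using this
    exact ge_of_tendsto hlim (eventually_atTop.2 ⟨1, fun n hn => hkey n hn⟩)
  rwa [hm0] at htend

/-- Theorem 2.1, discrete fractional Lyapunov method. A class-K function is
continuous, strictly increasing on `[0,∞)`, vanishes at `0` and maps `[0,∞)` to `[0,∞)`. -/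
theorem stmt_6 (α Δt : ℝ) (hα0 : 0 < α) (hα1 : α < 1) (hΔt : 0 < Δt)
    (l : ℝ → ℝ) (hl : l 0 = 0)
    (x : ℕ → ℝ) (hx : ∀ n : ℕ, 1 ≤ n → L1 α Δt x n = l (x n))
    (V W : ℝ → ℝ) (hV0 : V 0 = 0) (hW0 : W 0 = 0)
    (φ₁ φ₂ ψ₁ ψ₂ : ℝ → ℝ)
    (hφ₁ : ContinuousOn φ₁ (Set.Ici 0) ∧ StrictMonoOn φ₁ (Set.Ici 0) ∧ φ₁ 0 = 0 ∧
      Set.MapsTo φ₁ (Set.Ici 0) (Set.Ici 0))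
    (hφ₂ : ContinuousOn φ₂ (Set.Ici 0) ∧ StrictMonoOn φ₂ (Set.Ici 0) ∧ φ₂ 0 = 0 ∧
      Set.MapsTo φ₂ (Set.Ici 0) (Set.Ici 0))
    (hψ₁ : ContinuousOn ψ₁ (Set.Ici 0) ∧ StrictMonoOn ψ₁ (Set.Ici 0) ∧ ψ₁ 0 = 0 ∧
      Set.MapsTo ψ₁ (Set.Ici 0) (Set.Ici 0))
    (hψ₂ : ContinuousOn ψ₂ (Set.Ici 0) ∧ StrictMonoOn ψ₂ (Set.Ici 0) ∧ ψ₂ 0 = 0 ∧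
      Set.MapsTo ψ₂ (Set.Ici 0) (Set.Ici 0))
    (hVb : ∀ y : ℝ, φ₁ |y| ≤ V y ∧ V y ≤ φ₂ |y|)
    (hWb : ∀ y : ℝ, ψ₁ |y| ≤ W y ∧ W y ≤ ψ₂ |y|)
    (hLyap : ∀ n : ℕ, 1 ≤ n → L1 α Δt (fun j => V (x j)) n ≤ -W (x n)) :
    Filter.Tendsto x Filter.atTop (nhds 0) := by
  have hβ0 : (0:ℝ) < 1 - α := by linarith
  have hβ1 : (1:ℝ) - α < 1 := by linarith
  have hc : 0 < Δt ^ (-α) / Real.Gamma (2 - α) := by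
    have h1 : (0:ℝ) < Δt ^ (-α) := Real.rpow_pos_of_pos hΔt _
    have h2 : 0 < Real.Gamma (2 - α) := Real.Gamma_pos_of_pos (by linarith)
    positivity
  set c : ℝ := Δt ^ (-α) / Real.Gamma (2 - α) with hcdef
  set v : ℕ → ℝ := fun n => V (x n) with hvdef
  set w : ℕ → ℝ := fun n => W (x n) with hwdef
  have hVb' : ∀ n : ℕ, φ₁ |x n| ≤ v n ∧ v n ≤ φ₂ |x n| := fun n => hVb (x n)
  have hWb' : ∀ n : ℕ, ψ₁ |x n| ≤ w n ∧ w n ≤ ψ₂ |x n| := fun n => hWb (x n)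
  have hvnn : ∀ n, 0 ≤ v n := fun n =>
    le_trans (hφ₁.2.2.2 (Set.mem_Ici.2 (abs_nonneg (x n)))) ((hVb' n).1)
  have hwnn : ∀ n, 0 ≤ w n := fun n =>
    le_trans (hψ₁.2.2.2 (Set.mem_Ici.2 (abs_nonneg (x n)))) ((hWb' n).1)
  have hb0 : bcoef (1 - α) 0 = 1 := bcoef_zero' hβ0
  -- the basic recursion inequality
  have hineq : ∀ n : ℕ, 1 ≤ n →
      v n + w n / c ≤ bcoef (1-α) (n-1) * v 0 +
        ∑ j ∈ Finset.Icc 1 (n-1), (bcoef (1-α) (j-1) - bcoef (1-α) j) * v (n-j) := by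
    intro n hn
    have h := hLyap n hn
    simp only [L1] at h
    have h' : c * (v n - bcoef (1-α) (n-1) * v 0 -
        ∑ j ∈ Finset.Icc 1 (n-1), (bcoef (1-α) (j-1) - bcoef (1-α) j) * v (n-j)) ≤ -(w n) := h
    have h2 : v n - bcoef (1-α) (n-1) * v 0 -
        ∑ j ∈ Finset.Icc 1 (n-1), (bcoef (1-α) (j-1) - bcoef (1-α) j) * v (n-j)
        ≤ -(w n) / c := by
      rw [le_div_iff₀ hc, mul_comm]
      exact h'
    rw [neg_div] at h2
    linarith
  -- uniform bound
  have hv0 : ∀ n, v n ≤ v 0 := by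
    intro n
    induction n using Nat.strong_induction_on with
    | _ n ih =>
      rcases Nat.eq_zero_or_pos n with h0 | h1
      · subst h0; exact le_refl _
      · have h := hineq n h1
        have hsum : ∑ j ∈ Finset.Icc 1 (n-1), (bcoef (1-α) (j-1) - bcoef (1-α) j) * v (n-j)
            ≤ ∑ j ∈ Finset.Icc 1 (n-1), (bcoef (1-α) (j-1) - bcoef (1-α) j) * v 0 := by
          apply Finset.sum_le_sum
          intro j hj
          have hj1 : 1 ≤ j := (Finset.mem_Icc.1 hj).1
          exact mul_le_mul_of_nonneg_left (ih (n-j) (Nat.sub_lt h1 hj1))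
            (bcoef_coef_nonneg hβ0 hβ1 j)
        have hsum2 : ∑ j ∈ Finset.Icc 1 (n-1), (bcoef (1-α) (j-1) - bcoef (1-α) j) * v 0
            = v 0 - bcoef (1-α) (n-1) * v 0 := by
          rw [← Finset.sum_mul, Icc_one_eq_Ioc_zero, bcoef_tele_Ioc _ (Nat.zero_le _), hb0]
          ring
        have hwc : 0 ≤ w n / c := div_nonneg (hwnn n) hc.le
        linarith
  -- limsup
  have hAbove : IsBoundedUnder (· ≤ ·) atTop v := isBoundedUnder_of ⟨v 0, hv0⟩
  have hCob : IsCoboundedUnder (· ≤ ·) atTop v :=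
    isCoboundedUnder_le_of_le atTop (x := 0) fun n => hvnn n
  set L : ℝ := limsup v atTop with hLdef
  -- key eventual estimate
  have key : ∀ ε : ℝ, 0 < ε → ∀ᶠ n in atTop, v n + w n / c ≤ L + ε := by
    intro ε hε
    have h1 : ∀ᶠ k in atTop, v k < L + ε/2 :=
      eventually_lt_of_limsup_lt (by linarith : limsup v atTop < L + ε/2) hAbove
    obtain ⟨N0, hN0⟩ := eventually_atTop.1 h1
    set N := max N0 1 with hNdef
    have hN1 : 1 ≤ N := le_max_right _ _
    set C : ℝ := |v 0 - (L + ε/2)| + 1 with hCdef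
    have hCpos : 0 < C := by positivity
    have h2 : ∀ᶠ m in atTop, bcoef (1-α) m < ε/2/C :=
      (bcoef_tendsto hβ0 hβ1).eventually_lt_const (by positivity)
    obtain ⟨M, hM⟩ := eventually_atTop.1 h2
    filter_upwards [eventually_ge_atTop (N + M + 1)] with n hn
    have hn1 : 1 ≤ n := by omega
    have hsub : n - N ≤ n - 1 := by omega
    have hMle : M ≤ n - N := by omega
    have h := hineq n hn1
    rw [Icc_one_eq_Ioc_zero] at h
    rw [← Finset.sum_Ioc_consecutive
      (fun j => (bcoef (1-α) (j-1) - bcoef (1-α) j) * v (n-j)) (Nat.zero_le (n-N)) hsub] at h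
    have hpart1 : ∑ j ∈ Finset.Ioc 0 (n-N), (bcoef (1-α) (j-1) - bcoef (1-α) j) * v (n-j)
        ≤ (1 - bcoef (1-α) (n-N)) * (L + ε/2) := by
      calc ∑ j ∈ Finset.Ioc 0 (n-N), (bcoef (1-α) (j-1) - bcoef (1-α) j) * v (n-j)
          ≤ ∑ j ∈ Finset.Ioc 0 (n-N), (bcoef (1-α) (j-1) - bcoef (1-α) j) * (L + ε/2) := by
            apply Finset.sum_le_sum
            intro j hj
            rw [Finset.mem_Ioc] at hj
            have hNn : N0 ≤ n - j := by omega
            exact mul_le_mul_of_nonneg_left (hN0 (n-j) hNn).le (bcoef_coef_nonneg hβ0 hβ1 j)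
        _ = (1 - bcoef (1-α) (n-N)) * (L + ε/2) := by
            rw [← Finset.sum_mul, bcoef_tele_Ioc _ (Nat.zero_le _), hb0]
    have hpart2 : ∑ j ∈ Finset.Ioc (n-N) (n-1), (bcoef (1-α) (j-1) - bcoef (1-α) j) * v (n-j)
        ≤ (bcoef (1-α) (n-N) - bcoef (1-α) (n-1)) * v 0 := by
      calc ∑ j ∈ Finset.Ioc (n-N) (n-1), (bcoef (1-α) (j-1) - bcoef (1-α) j) * v (n-j)
          ≤ ∑ j ∈ Finset.Ioc (n-N) (n-1), (bcoef (1-α) (j-1) - bcoef (1-α) j) * v 0 :=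
            Finset.sum_le_sum fun j _ =>
              mul_le_mul_of_nonneg_left (hv0 (n-j)) (bcoef_coef_nonneg hβ0 hβ1 j)
        _ = (bcoef (1-α) (n-N) - bcoef (1-α) (n-1)) * v 0 := by
            rw [← Finset.sum_mul, bcoef_tele_Ioc _ hsub]
    have hbsmall : bcoef (1-α) (n-N) * (v 0 - (L + ε/2)) ≤ ε/2 := by
      have h1' : bcoef (1-α) (n-N) < ε/2/C := hM _ hMle
      have h2' : 0 ≤ bcoef (1-α) (n-N) := bcoef_nonneg hβ0 _
      have h3' : v 0 - (L + ε/2) ≤ C := by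
        rw [hCdef]; linarith [le_abs_self (v 0 - (L + ε/2))]
      calc bcoef (1-α) (n-N) * (v 0 - (L + ε/2)) ≤ bcoef (1-α) (n-N) * C :=
            mul_le_mul_of_nonneg_left h3' h2'
        _ ≤ (ε/2/C) * C := mul_le_mul_of_nonneg_right h1'.le hCpos.le
        _ = ε/2 := div_mul_cancel₀ _ hCpos.ne'
    have hfinal : bcoef (1-α) (n-1) * v 0 + (1 - bcoef (1-α) (n-N)) * (L + ε/2)
        + (bcoef (1-α) (n-N) - bcoef (1-α) (n-1)) * v 0
        = (L + ε/2) + bcoef (1-α) (n-N) * (v 0 - (L + ε/2)) := by ring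
    linarith
  -- positivity of class-K at positive arguments
  have hψδ : ∀ δ : ℝ, 0 < δ → 0 < ψ₁ δ := fun δ hδ => by
    have h := hψ₁.2.1 Set.self_mem_Ici (Set.mem_Ici.2 hδ.le) hδ
    rwa [hψ₁.2.2.1] at h
  have hφε : ∀ ε : ℝ, 0 < ε → 0 < φ₁ ε := fun ε hε => by
    have h := hφ₁.2.1 Set.self_mem_Ici (Set.mem_Ici.2 hε.le) hε
    rwa [hφ₁.2.2.1] at h
  -- L ≤ φ₂ δ for all δ > 0
  have hLle : ∀ δ : ℝ, 0 < δ → L ≤ φ₂ δ := by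
    intro δ hδ
    by_contra hcon
    push_neg at hcon
    set εp : ℝ := min ((L - φ₂ δ)/2) (ψ₁ δ / (2*c)) with hεpdef
    have hψδ' := hψδ δ hδ
    have hεp : 0 < εp := lt_min (by linarith) (by positivity)
    have hεp1 : εp ≤ (L - φ₂ δ)/2 := min_le_left _ _
    have hεp2 : εp ≤ ψ₁ δ / (2*c) := min_le_right _ _
    have hev := key εp hεp
    have hfreq : ∃ᶠ n in atTop, L - εp < v n :=
      frequently_lt_of_lt_limsup hCob (by linarith : L - εp < limsup v atTop)
    obtain ⟨n, hn1, hn2⟩ := (hfreq.and_eventually hev).exists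
    have hwc : w n / c < 2 * εp := by linarith
    have hwlt : w n < ψ₁ δ := by
      have h1 : w n < 2 * εp * c := by
        have := (div_lt_iff₀ hc).1 hwc
        linarith
      have h2 : 2 * εp * c ≤ ψ₁ δ := by
        rw [le_div_iff₀ (by positivity : (0:ℝ) < 2*c)] at hεp2
        have he : εp * (2*c) = 2*εp*c := by ring
        linarith
      linarith
    have hxlt : |x n| < δ := by
      by_contra hcon2
      push_neg at hcon2
      have h1 : ψ₁ δ ≤ ψ₁ |x n| := hψ₁.2.1.monotoneOn (Set.mem_Ici.2 hδ.le)
        (Set.mem_Ici.2 (abs_nonneg _)) hcon2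
      linarith [(hWb' n).1]
    have hvφ : v n ≤ φ₂ δ := le_trans (hVb' n).2
      (hφ₂.2.1.monotoneOn (Set.mem_Ici.2 (abs_nonneg _)) (Set.mem_Ici.2 hδ.le) hxlt.le)
    linarith
  -- L ≤ 0
  have hL0 : L ≤ 0 := by
    have hcont : ContinuousWithinAt φ₂ (Set.Ici 0) 0 := hφ₂.1 0 Set.self_mem_Ici
    have ht : Tendsto φ₂ (nhdsWithin 0 (Set.Ioi 0)) (nhds 0) := by
      have h := hcont.tendsto
      rw [hφ₂.2.2.1] at h
      exact h.mono_left (nhdsWithin_mono 0 Set.Ioi_subset_Ici_self)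
    exact ge_of_tendsto ht (eventually_nhdsWithin_of_forall fun δ hδ => hLle δ hδ)
  -- v → 0
  have hvto : Tendsto v atTop (nhds 0) := by
    rw [Metric.tendsto_atTop]
    intro ε hε
    have h1 : ∀ᶠ n in atTop, v n < ε :=
      eventually_lt_of_limsup_lt (by linarith : limsup v atTop < ε) hAbove
    obtain ⟨N, hN⟩ := eventually_atTop.1 h1
    refine ⟨N, fun n hn => ?_⟩
    rw [Real.dist_eq, sub_zero, abs_of_nonneg (hvnn n)]
    exact hN n hn
  -- x → 0
  rw [Metric.tendsto_atTop]
  intro ε hε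
  obtain ⟨N, hN⟩ := Metric.tendsto_atTop.1 hvto (φ₁ ε) (hφε ε hε)
  refine ⟨N, fun n hn => ?_⟩
  rw [Real.dist_eq, sub_zero]
  by_contra hcon
  push_neg at hcon
  have h1 : φ₁ ε ≤ φ₁ |x n| := hφ₁.2.1.monotoneOn (Set.mem_Ici.2 hε.le)
    (Set.mem_Ici.2 (abs_nonneg _)) hcon
  have h3 := hN n hn
  rw [Real.dist_eq, sub_zero, abs_of_nonneg (hvnn n)] at h3
  linarith [(hVb' n).1]
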